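/- Let X_1,…,X_t be finite nonempty sets and let (S,F) be a DDWB process on X_1 × ⋯ × X_t with distribution π and with blockage bound ≤ β. Let i_1 < ⋯ < i_k be indices in {1,…,t} and let f : X_1 × ⋯ × X_t → [0,1] be a function that depends only on the coordinates i_1,…,i_k (that is, f(a) = f(b) whenever a and b agree on these coordinates). Assume that for every tuple a with f(a) > 0 and every j ∈ {1,…,k}, a_{i_j} ∈ S_{i_j}(a_1,…,a_{i_j−1}). Then Σ_a π(a) · f(a) ≥ (Σ_a f(a)) / (|X_1| ⋯ |X_t|) − k · β. -/

import Mathlib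

set_option linter.unusedSectionVars false
set_option maxHeartbeats 1000000

section ddwbAux
variable {t : ℕ} {X : Fin t → Type*} [∀ i, Fintype (X i)] [∀ i, DecidableEq (X i)]
  [∀ i, Nonempty (X i)]
  (S F : ∀ i : Fin t, (∀ j : Fin t, X j) → Finset (X i))

/-- The kernel of coordinate `i`. -/
noncomputable def dKer (i : Fin t) (a : ∀ j : Fin t, X j) (x : X i) : ℝ :=
  if x ∈ S i a \ F i a then ((S i a \ F i a).card : ℝ)⁻¹ else 0

/-- Hybrid weight at level `m`: kernel below `m`, uniform from `m` on. -/
noncomputable def dW (m : ℕ) (i : Fin t) (a : ∀ j : Fin t, X j) : ℝ :=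
  if (i : ℕ) < m then dKer S F i a (a i) else ((Fintype.card (X i) : ℝ))⁻¹

lemma dKer_nonneg (i : Fin t) (a) (x : X i) : 0 ≤ dKer S F i a x := by
  unfold dKer; split <;> positivity

lemma dW_nonneg (m : ℕ) (i : Fin t) (a) : 0 ≤ dW S F m i a := by
  unfold dW; split
  · exact dKer_nonneg S F i a (a i)
  · positivity

lemma dKer_sum (i : Fin t) (a) (hne : (S i a \ F i a).Nonempty) :
    ∑ x : X i, dKer S F i a x = 1 := by
  unfold dKer
  rw [Finset.sum_ite_mem, Finset.univ_inter, Finset.sum_const, nsmul_eq_mul,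
    mul_inv_cancel₀]
  exact_mod_cast Finset.card_ne_zero_of_mem hne.choose_spec

lemma dW_succ_eq (m : ℕ) (hm : m < t) (i : Fin t) (hiM : i ≠ (⟨m, hm⟩ : Fin t)) (a) :
    dW S F (m + 1) i a = dW S F m i a := by
  have hiv : (i : ℕ) ≠ m := fun h => hiM (Fin.ext h)
  have h : ((i : ℕ) < m + 1) ↔ ((i : ℕ) < m) := by omega
  unfold dW; simp only [h]

lemma sum_split (M : Fin t) (G : (∀ j : Fin t, X j) → ℝ) :
    ∑ a, G a = ∑ u : ∀ j : {j : Fin t // j ≠ M}, X j, ∑ x : X M,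
      G ((Equiv.piSplitAt M X).symm (x, u)) := by
  rw [← Equiv.sum_comp (Equiv.piSplitAt M X).symm G, Fintype.sum_prod_type]
  exact Finset.sum_comm

lemma piSplitAt_symm_apply_same (M : Fin t) (x : X M)
    (u : ∀ j : {j : Fin t // j ≠ M}, X j) :
    (Equiv.piSplitAt M X).symm (x, u) M = x := by simp

lemma piSplitAt_symm_apply_ne (M : Fin t) (x : X M)
    (u : ∀ j : {j : Fin t // j ≠ M}, X j) (j : Fin t) (h : j ≠ M) :
    (Equiv.piSplitAt M X).symm (x, u) j = u ⟨j, h⟩ := by simp [h]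

lemma factor
    (hSpre : ∀ i : Fin t, ∀ u v : ∀ j : Fin t, X j, (∀ j, j < i → u j = v j) → S i u = S i v)
    (hFpre : ∀ i : Fin t, ∀ u v : ∀ j : Fin t, X j, (∀ j, j < i → u j = v j) → F i u = F i v)
    (m : ℕ) (hm : m < t) (m' : ℕ) (hm' : m' ≤ m + 1) (G : (∀ j : Fin t, X j) → ℝ) :
    ∑ a, (∏ i, dW S F m' i a) * G a
      = ∑ u : ∀ j : {j : Fin t // j ≠ (⟨m, hm⟩ : Fin t)}, X j,
          (∏ i ∈ Finset.univ.erase (⟨m, hm⟩ : Fin t),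
              dW S F m' i ((Equiv.piSplitAt (⟨m, hm⟩ : Fin t) X).symm
                (Classical.arbitrary (X ⟨m, hm⟩), u))) *
          ∑ x : X (⟨m, hm⟩ : Fin t),
            (if m < m' then dKer S F ⟨m, hm⟩
                ((Equiv.piSplitAt (⟨m, hm⟩ : Fin t) X).symm (Classical.arbitrary (X ⟨m, hm⟩), u)) x
             else ((Fintype.card (X (⟨m, hm⟩ : Fin t)) : ℝ))⁻¹) *
            G ((Equiv.piSplitAt (⟨m, hm⟩ : Fin t) X).symm (x, u)) := by
  set M : Fin t := ⟨m, hm⟩ with hM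
  rw [sum_split M]
  refine Finset.sum_congr rfl fun u _ => ?_
  rw [Finset.mul_sum]
  refine Finset.sum_congr rfl fun x _ => ?_
  set r := (Equiv.piSplitAt M X).symm (Classical.arbitrary (X M), u) with hr
  set a := (Equiv.piSplitAt M X).symm (x, u) with ha
  have hagree : ∀ j, j ≠ M → a j = r j := fun j hj => by
    rw [ha, hr, piSplitAt_symm_apply_ne M x u j hj, piSplitAt_symm_apply_ne M _ u j hj]
  have hprod : ∏ i ∈ Finset.univ.erase M, dW S F m' i a
      = ∏ i ∈ Finset.univ.erase M, dW S F m' i r := by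
    refine Finset.prod_congr rfl fun i hi => ?_
    have hiM : i ≠ M := (Finset.mem_erase.1 hi).1
    unfold dW
    split
    · next hlt =>
      have hival : (i : ℕ) ≠ m := fun h => hiM (Fin.ext h)
      have hiM' : i < M := by
        rw [Fin.lt_def]; show (i : ℕ) < m; omega
      have hpre : ∀ j, j < i → a j = r j := fun j hj =>
        hagree j (Fin.ne_of_lt (hj.trans hiM'))
      unfold dKer
      rw [hSpre i a r hpre, hFpre i a r hpre, hagree i hiM]
    · rfl
  have hMfac : dW S F m' M a
      = if m < m' then dKer S F M r x else ((Fintype.card (X M) : ℝ))⁻¹ := by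
    unfold dW
    split_ifs with h1
    · have hpre : ∀ j, j < M → a j = r j := fun j hj => hagree j (Fin.ne_of_lt hj)
      unfold dKer
      rw [hSpre M a r hpre, hFpre M a r hpre, ha, piSplitAt_symm_apply_same]
    · rfl
  rw [← Finset.mul_prod_erase Finset.univ _ (Finset.mem_univ M), hprod, hMfac]
  ring

lemma dZ_succ
    (hSpre : ∀ i : Fin t, ∀ u v : ∀ j : Fin t, X j, (∀ j, j < i → u j = v j) → S i u = S i v)
    (hFpre : ∀ i : Fin t, ∀ u v : ∀ j : Fin t, X j, (∀ j, j < i → u j = v j) → F i u = F i v)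
    (hne : ∀ (i : Fin t) (u : ∀ j : Fin t, X j), (S i u \ F i u).Nonempty)
    (m : ℕ) (hm : m < t) :
    (∑ a : ∀ j : Fin t, X j, ∏ i, dW S F (m + 1) i a)
      = ∑ a : ∀ j : Fin t, X j, ∏ i, dW S F m i a := by
  have h1 := factor S F hSpre hFpre m hm (m + 1) le_rfl (fun _ => (1 : ℝ))
  have h2 := factor S F hSpre hFpre m hm m (Nat.le_succ m) (fun _ => (1 : ℝ))
  simp only [mul_one, show (m < m + 1) = True from eq_true (Nat.lt_succ_self m),
    show (m < m) = False from eq_false (lt_irrefl m), if_true, if_false] at h1 h2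
  rw [h1, h2]
  refine Finset.sum_congr rfl fun u _ => ?_
  rw [dKer_sum S F ⟨m, hm⟩ _ (hne _ _), Finset.sum_const, Finset.card_univ, nsmul_eq_mul,
    mul_inv_cancel₀ (by exact_mod_cast Fintype.card_ne_zero), mul_one, mul_one]
  exact Finset.prod_congr rfl fun i hi => dW_succ_eq S F m hm i (Finset.mem_erase.1 hi).1 _

lemma dZ_one
    (hSpre : ∀ i : Fin t, ∀ u v : ∀ j : Fin t, X j, (∀ j, j < i → u j = v j) → S i u = S i v)
    (hFpre : ∀ i : Fin t, ∀ u v : ∀ j : Fin t, X j, (∀ j, j < i → u j = v j) → F i u = F i v)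
    (hne : ∀ (i : Fin t) (u : ∀ j : Fin t, X j), (S i u \ F i u).Nonempty)
    (m : ℕ) (hm : m ≤ t) :
    (∑ a : ∀ j : Fin t, X j, ∏ i, dW S F m i a) = 1 := by
  induction m with
  | zero =>
      unfold dW
      simp only [Nat.not_lt_zero, if_false]
      rw [Finset.sum_const, Finset.card_univ, Fintype.card_pi, nsmul_eq_mul]
      push_cast
      rw [← Finset.prod_mul_distrib]
      refine Finset.prod_eq_one fun i _ => ?_
      rw [mul_inv_cancel₀]
      exact_mod_cast Fintype.card_ne_zero
  | succ n ih =>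
      rw [dZ_succ S F hSpre hFpre hne n (by omega)]
      exact ih (by omega)

end ddwbAux

lemma inner_generic {α : Type*} [Fintype α] [DecidableEq α] (Su Fu : Finset α) (β : ℝ)
    (hne : (Su \ Fu).Nonempty) (hβ : ((Fu.card : ℝ)) ≤ β * (Su.card : ℝ))
    (φ : α → ℝ) (hφ0 : ∀ x, 0 ≤ φ x) (hφ1 : ∀ x, φ x ≤ 1)
    (hsupp : ∀ x, x ∉ Su → φ x = 0) :
    ∑ x, ((Fintype.card α : ℝ))⁻¹ * φ x - β
      ≤ ∑ x, (if x ∈ Su \ Fu then (((Su \ Fu).card : ℝ))⁻¹ else 0) * φ x := by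
  have htc : (0:ℝ) < ((Su \ Fu).card : ℝ) := by
    exact_mod_cast Finset.card_pos.2 hne
  have hts : ((Su \ Fu).card : ℝ) ≤ (Su.card : ℝ) := by
    exact_mod_cast Finset.card_le_card (Finset.sdiff_subset)
  have hsc : (0:ℝ) < (Su.card : ℝ) := lt_of_lt_of_le htc hts
  have hsn : ((Su.card : ℝ)) ≤ (Fintype.card α : ℝ) := by
    exact_mod_cast Finset.card_le_univ Su
  have hn : (0:ℝ) < (Fintype.card α : ℝ) := lt_of_lt_of_le hsc hsn
  have hA : ∑ x, (if x ∈ Su \ Fu then (((Su \ Fu).card : ℝ))⁻¹ else 0) * φ x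
      = (∑ x ∈ Su \ Fu, φ x) / ((Su \ Fu).card : ℝ) := by
    simp only [ite_mul, zero_mul]
    rw [Finset.sum_ite_mem, Finset.univ_inter, Finset.sum_div]
    exact Finset.sum_congr rfl fun x _ => inv_mul_eq_div _ _
  have hU : ∑ x, ((Fintype.card α : ℝ))⁻¹ * φ x = (∑ x, φ x) / (Fintype.card α : ℝ) := by
    rw [Finset.sum_div]
    exact Finset.sum_congr rfl fun x _ => inv_mul_eq_div _ _
  have hBU : ∑ x ∈ Su, φ x = ∑ x, φ x :=
    Finset.sum_subset (Finset.subset_univ Su) (fun x _ hx => hsupp x hx)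
  have hsdiff : ∑ x ∈ Su \ (Su \ Fu), φ x + ∑ x ∈ Su \ Fu, φ x = ∑ x ∈ Su, φ x :=
    Finset.sum_sdiff (Finset.sdiff_subset)
  have hFbd : ∑ x ∈ Su \ (Su \ Fu), φ x ≤ (Fu.card : ℝ) := by
    calc ∑ x ∈ Su \ (Su \ Fu), φ x ≤ ∑ _x ∈ Su \ (Su \ Fu), (1:ℝ) :=
          Finset.sum_le_sum fun x _ => hφ1 x
      _ = ((Su \ (Su \ Fu)).card : ℝ) := by simp
      _ ≤ (Fu.card : ℝ) := by
          have : Su \ (Su \ Fu) ⊆ Fu := by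
            rw [Finset.sdiff_sdiff_self_left]; exact Finset.inter_subset_right
          exact_mod_cast Finset.card_le_card this
  have hTB : (∑ x ∈ Su, φ x) - (Fu.card : ℝ) ≤ ∑ x ∈ Su \ Fu, φ x := by linarith
  have hT0 : 0 ≤ ∑ x ∈ Su \ Fu, φ x := Finset.sum_nonneg fun x _ => hφ0 x
  have hB0 : 0 ≤ ∑ x, φ x := Finset.sum_nonneg fun x _ => hφ0 x
  rw [hA, hU]
  calc (∑ x, φ x) / (Fintype.card α : ℝ) - β
      ≤ (∑ x, φ x) / (Su.card : ℝ) - β := by gcongr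
    _ ≤ (∑ x, φ x) / (Su.card : ℝ) - (Fu.card : ℝ) / (Su.card : ℝ) := by
        gcongr
        exact (div_le_iff₀ hsc).2 hβ
    _ = ((∑ x ∈ Su, φ x) - (Fu.card : ℝ)) / (Su.card : ℝ) := by rw [hBU]; ring
    _ ≤ (∑ x ∈ Su \ Fu, φ x) / (Su.card : ℝ) := by gcongr
    _ ≤ (∑ x ∈ Su \ Fu, φ x) / ((Su \ Fu).card : ℝ) := by gcongr

/-- The mass assigned by a DDWB process `(S,F)` to a tuple `a`:
`∏ᵢ [aᵢ ∈ Sᵢ(a) \ Fᵢ(a)] / |Sᵢ(a) \ Fᵢ(a)|`.  (The maps `S i`, `F i` are required,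
in theorems using this, to depend only on the coordinates `< i`, so this agrees with the
usual definition in terms of prefixes.) -/
noncomputable def ddwbMass {t : ℕ} {X : Fin t → Type*} [∀ i, Fintype (X i)]
    [∀ i, DecidableEq (X i)]
    (S F : ∀ i : Fin t, (∀ j : Fin t, X j) → Finset (X i)) (a : ∀ j : Fin t, X j) : ℝ :=
  ∏ i, if a i ∈ S i a \ F i a then (((S i a \ F i a).card : ℝ))⁻¹ else 0

/-- loss-of-expectation lemma for DDWB distributions:
Let `(S,F)` be a DDWB process on `X₁ × ⋯ × X_t` with distribution `π` and blockage bound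
`≤ β`.  Let `f : X₁ × ⋯ × X_t → [0,1]` depend only on `k` coordinates `i₁,…,i_k`, and
assume that whenever `f(a) > 0`, each `a_{i_j} ∈ S_{i_j}(a₁,…,a_{i_j−1})`.  Then
`Σ_a π(a)·f(a) ≥ (Σ_a f(a)) / (|X₁|⋯|X_t|) − k·β`. -/
theorem stmt9 (t : ℕ) (X : Fin t → Type*) [∀ i, Fintype (X i)] [∀ i, DecidableEq (X i)]
    [∀ i, Nonempty (X i)]
    (S F : ∀ i : Fin t, (∀ j : Fin t, X j) → Finset (X i))
    (hSpre : ∀ i : Fin t, ∀ u v : ∀ j : Fin t, X j, (∀ j, j < i → u j = v j) → S i u = S i v)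
    (hFpre : ∀ i : Fin t, ∀ u v : ∀ j : Fin t, X j, (∀ j, j < i → u j = v j) → F i u = F i v)
    (hne : ∀ (i : Fin t) (u : ∀ j : Fin t, X j), (S i u \ F i u).Nonempty)
    (β : ℝ) (hβ : ∀ (i : Fin t) (u : ∀ j : Fin t, X j), ((F i u).card : ℝ) ≤ β * ((S i u).card : ℝ))
    (k : ℕ) (I : Finset (Fin t)) (hI : I.card = k)
    (f : (∀ j : Fin t, X j) → ℝ) (hf0 : ∀ a, 0 ≤ f a) (hf1 : ∀ a, f a ≤ 1)
    (hfdep : ∀ a b : ∀ j : Fin t, X j, (∀ i ∈ I, a i = b i) → f a = f b)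
    (hsupp : ∀ a : ∀ j : Fin t, X j, 0 < f a → ∀ i ∈ I, a i ∈ S i a) :
    (∑ a : ∀ j : Fin t, X j, f a) / (∏ i, (Fintype.card (X i) : ℝ)) - (k : ℝ) * β ≤
      ∑ a : ∀ j : Fin t, X j, ddwbMass S F a * f a := by
  -- the key one-step inequality
  have hstep : ∀ (m : ℕ) (hm : m < t),
      (∑ a : ∀ j : Fin t, X j, (∏ i, dW S F m i a) * f a)
        - (if (⟨m, hm⟩ : Fin t) ∈ I then β else 0)
      ≤ ∑ a : ∀ j : Fin t, X j, (∏ i, dW S F (m + 1) i a) * f a := by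
    intro m hm
    have h1 := factor S F hSpre hFpre m hm (m + 1) le_rfl f
    have h2 := factor S F hSpre hFpre m hm m (Nat.le_succ m) f
    have hZ := factor S F hSpre hFpre m hm (m + 1) le_rfl (fun _ => (1 : ℝ))
    simp only [mul_one, show (m < m + 1) = True from eq_true (Nat.lt_succ_self m),
      show (m < m) = False from eq_false (lt_irrefl m), if_true, if_false] at h1 h2 hZ
    have hC : ∀ u : ∀ j : {j : Fin t // j ≠ (⟨m, hm⟩ : Fin t)}, X j,
        (∏ i ∈ Finset.univ.erase (⟨m, hm⟩ : Fin t),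
          dW S F (m + 1) i ((Equiv.piSplitAt (⟨m, hm⟩ : Fin t) X).symm
            (Classical.arbitrary (X ⟨m, hm⟩), u)))
        = ∏ i ∈ Finset.univ.erase (⟨m, hm⟩ : Fin t),
          dW S F m i ((Equiv.piSplitAt (⟨m, hm⟩ : Fin t) X).symm
            (Classical.arbitrary (X ⟨m, hm⟩), u)) := fun u =>
      Finset.prod_congr rfl fun i hi => dW_succ_eq S F m hm i (Finset.mem_erase.1 hi).1 _
    simp only [hC] at h1 hZ
    rw [h1, h2]
    rw [dZ_one S F hSpre hFpre hne (m + 1) (by omega)] at hZ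
    set M : Fin t := ⟨m, hm⟩ with hM
    set r : (∀ j : {j : Fin t // j ≠ M}, X j) → (∀ j : Fin t, X j) :=
      fun u => (Equiv.piSplitAt M X).symm (Classical.arbitrary (X M), u) with hrdef
    have hZ' : (∑ u : ∀ j : {j : Fin t // j ≠ M}, X j,
        (∏ i ∈ Finset.univ.erase M, dW S F m i (r u)) *
          (∑ x : X M, dKer S F M (r u) x)) = 1 := hZ.symm
    by_cases hMI : M ∈ I
    · -- the coordinate belongs to I: lose at most β
      rw [if_pos hMI]
      have key : ∀ u : ∀ j : {j : Fin t // j ≠ M}, X j,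
          (∏ i ∈ Finset.univ.erase M, dW S F m i (r u)) *
            (∑ x : X M, ((Fintype.card (X M) : ℝ))⁻¹ * f ((Equiv.piSplitAt M X).symm (x, u)))
          - β * ((∏ i ∈ Finset.univ.erase M, dW S F m i (r u)) *
              (∑ x : X M, dKer S F M (r u) x))
          ≤ (∏ i ∈ Finset.univ.erase M, dW S F m i (r u)) *
              (∑ x : X M, dKer S F M (r u) x * f ((Equiv.piSplitAt M X).symm (x, u))) := by
        intro u
        have hCnn : 0 ≤ ∏ i ∈ Finset.univ.erase M, dW S F m i (r u) :=
          Finset.prod_nonneg fun i _ => dW_nonneg S F m i _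
        have hinner :
            (∑ x : X M, ((Fintype.card (X M) : ℝ))⁻¹ * f ((Equiv.piSplitAt M X).symm (x, u)))
              - β * (∑ x : X M, dKer S F M (r u) x)
            ≤ ∑ x : X M, dKer S F M (r u) x * f ((Equiv.piSplitAt M X).symm (x, u)) := by
          rw [dKer_sum S F M (r u) (hne M (r u)), mul_one]
          have hsub : ∀ x : X M, x ∉ S M (r u) → f ((Equiv.piSplitAt M X).symm (x, u)) = 0 := by
            intro x hx
            by_contra hne0
            have hpos : 0 < f ((Equiv.piSplitAt M X).symm (x, u)) :=
              lt_of_le_of_ne (hf0 _) (Ne.symm hne0)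
            have hmem := hsupp _ hpos M hMI
            rw [piSplitAt_symm_apply_same] at hmem
            have hagr : ∀ j, j < M → ((Equiv.piSplitAt M X).symm (x, u)) j = r u j := by
              intro j hj
              rw [piSplitAt_symm_apply_ne M x u j (Fin.ne_of_lt hj)]
              exact (piSplitAt_symm_apply_ne M (Classical.arbitrary (X M)) u j
                (Fin.ne_of_lt hj)).symm
            rw [hSpre M _ _ hagr] at hmem
            exact hx hmem
          have := inner_generic (S M (r u)) (F M (r u)) β (hne M (r u)) (hβ M (r u))
            (fun x => f ((Equiv.piSplitAt M X).symm (x, u))) (fun x => hf0 _) (fun x => hf1 _)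
            hsub
          convert this using 2
          rfl
        calc (∏ i ∈ Finset.univ.erase M, dW S F m i (r u)) *
              (∑ x : X M, ((Fintype.card (X M) : ℝ))⁻¹ * f ((Equiv.piSplitAt M X).symm (x, u)))
            - β * ((∏ i ∈ Finset.univ.erase M, dW S F m i (r u)) *
                (∑ x : X M, dKer S F M (r u) x))
            = (∏ i ∈ Finset.univ.erase M, dW S F m i (r u)) *
                ((∑ x : X M, ((Fintype.card (X M) : ℝ))⁻¹ * f ((Equiv.piSplitAt M X).symm (x, u)))
                  - β * (∑ x : X M, dKer S F M (r u) x)) := by ring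
          _ ≤ _ := mul_le_mul_of_nonneg_left hinner hCnn
      calc (∑ u : ∀ j : {j : Fin t // j ≠ M}, X j,
              (∏ i ∈ Finset.univ.erase M, dW S F m i (r u)) *
              ∑ x : X M, ((Fintype.card (X M) : ℝ))⁻¹ * f ((Equiv.piSplitAt M X).symm (x, u))) - β
          = (∑ u : ∀ j : {j : Fin t // j ≠ M}, X j,
              (∏ i ∈ Finset.univ.erase M, dW S F m i (r u)) *
              ∑ x : X M, ((Fintype.card (X M) : ℝ))⁻¹ * f ((Equiv.piSplitAt M X).symm (x, u)))
            - β * ∑ u : ∀ j : {j : Fin t // j ≠ M}, X j,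
              (∏ i ∈ Finset.univ.erase M, dW S F m i (r u)) *
              (∑ x : X M, dKer S F M (r u) x) := by rw [hZ', mul_one]
        _ = ∑ u : ∀ j : {j : Fin t // j ≠ M}, X j,
              ((∏ i ∈ Finset.univ.erase M, dW S F m i (r u)) *
                (∑ x : X M, ((Fintype.card (X M) : ℝ))⁻¹ * f ((Equiv.piSplitAt M X).symm (x, u)))
              - β * ((∏ i ∈ Finset.univ.erase M, dW S F m i (r u)) *
                (∑ x : X M, dKer S F M (r u) x))) := by
            rw [Finset.sum_sub_distrib, Finset.mul_sum]
        _ ≤ _ := Finset.sum_le_sum fun u _ => key u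
    · -- the coordinate is not in I: exact equality
      rw [if_neg hMI, sub_zero]
      refine le_of_eq (Finset.sum_congr rfl fun u _ => ?_)
      have hfconst : ∀ x : X M, f ((Equiv.piSplitAt M X).symm (x, u)) = f (r u) := by
        intro x
        refine hfdep _ _ fun i hi => ?_
        have hiM : i ≠ M := fun h => hMI (h ▸ hi)
        rw [piSplitAt_symm_apply_ne M x u i hiM]
        exact (piSplitAt_symm_apply_ne M (Classical.arbitrary (X M)) u i hiM).symm
      congr 1
      simp only [hfconst]
      rw [← Finset.sum_mul, ← Finset.sum_mul, dKer_sum S F M (r u) (hne M (r u)),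
        Finset.sum_const, Finset.card_univ, nsmul_eq_mul,
        mul_inv_cancel₀ (by exact_mod_cast Fintype.card_ne_zero : (Fintype.card (X M) : ℝ) ≠ 0)]
  -- accumulate the steps
  have hmain : ∀ m, m ≤ t →
      (∑ a : ∀ j : Fin t, X j, (∏ i, dW S F 0 i a) * f a)
        - β * ((I.filter fun (i : Fin t) => (i : ℕ) < m).card : ℝ)
      ≤ ∑ a : ∀ j : Fin t, X j, (∏ i, dW S F m i a) * f a := by
    intro m
    induction m with
    | zero => intro _; simp
    | succ n ih =>
        intro h
        have hn : n < t := by omega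
        have hfilter : (I.filter fun (i : Fin t) => (i : ℕ) < n + 1)
            = (I.filter fun (i : Fin t) => (i : ℕ) < n) ∪ (I.filter fun (i : Fin t) => i = (⟨n, hn⟩ : Fin t)) := by
          rw [← Finset.filter_or]
          refine Finset.filter_congr fun i _ => ?_
          simp only [Fin.ext_iff]
          show (i : ℕ) < n + 1 ↔ ((i : ℕ) < n ∨ (i : ℕ) = n)
          omega
        have hdis : Disjoint (I.filter fun (i : Fin t) => (i : ℕ) < n)
            (I.filter fun (i : Fin t) => i = (⟨n, hn⟩ : Fin t)) := by
          rw [Finset.disjoint_left]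
          intro i h1 h2
          have ha := (Finset.mem_filter.1 h1).2
          have hb := (Finset.mem_filter.1 h2).2
          rw [hb] at ha
          exact absurd ha (lt_irrefl n)
        have hcard : ((I.filter fun (i : Fin t) => (i : ℕ) < n + 1).card : ℝ)
            = ((I.filter fun (i : Fin t) => (i : ℕ) < n).card : ℝ)
              + (if (⟨n, hn⟩ : Fin t) ∈ I then 1 else 0) := by
          rw [hfilter, Finset.card_union_of_disjoint hdis, Finset.filter_eq']
          push_cast [apply_ite Finset.card]
          split_ifs <;> simp
        calc (∑ a : ∀ j : Fin t, X j, (∏ i, dW S F 0 i a) * f a)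
              - β * ((I.filter fun (i : Fin t) => (i : ℕ) < n + 1).card : ℝ)
            = ((∑ a : ∀ j : Fin t, X j, (∏ i, dW S F 0 i a) * f a)
              - β * ((I.filter fun (i : Fin t) => (i : ℕ) < n).card : ℝ))
              - (if (⟨n, hn⟩ : Fin t) ∈ I then β else 0) := by
              rw [hcard]; split_ifs <;> ring
          _ ≤ (∑ a : ∀ j : Fin t, X j, (∏ i, dW S F n i a) * f a)
              - (if (⟨n, hn⟩ : Fin t) ∈ I then β else 0) :=
              sub_le_sub_right (ih (by omega)) _
          _ ≤ _ := hstep n hn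
  have := hmain t le_rfl
  have hfull : (I.filter fun (i : Fin t) => (i : ℕ) < t) = I :=
    Finset.filter_true_of_mem fun i _ => i.isLt
  rw [hfull, hI] at this
  have hzero : (∑ a : ∀ j : Fin t, X j, (∏ i, dW S F 0 i a) * f a)
      = (∑ a : ∀ j : Fin t, X j, f a) / (∏ i, (Fintype.card (X i) : ℝ)) := by
    have : ∀ a : ∀ j : Fin t, X j, (∏ i, dW S F 0 i a)
        = (∏ i, (Fintype.card (X i) : ℝ))⁻¹ := by
      intro a
      rw [← Finset.prod_inv_distrib]
      exact Finset.prod_congr rfl fun i _ => by unfold dW; rw [if_neg (Nat.not_lt_zero _)]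
    simp only [this]
    rw [← Finset.mul_sum, inv_mul_eq_div]
  have hT : (∑ a : ∀ j : Fin t, X j, (∏ i, dW S F t i a) * f a)
      = ∑ a : ∀ j : Fin t, X j, ddwbMass S F a * f a := by
    refine Finset.sum_congr rfl fun a _ => ?_
    congr 1
    unfold dW ddwbMass
    exact Finset.prod_congr rfl fun i _ => if_pos i.isLt
  rw [hzero, hT] at this
  linarith
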